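/- For all positive integers m and n, the following identity of rational numbers holds: Σ_{k=−n}^{n} (−1)^k k^(2m) / (2n−2k+1) · binom(4n+1, 2n+2k+1) = Σ_{j=1}^{m} Σ_{k=−j}^{j} 4^(n−j) (−1)^k k^(2m) / (2n−2j+1) · binom(2n, 2j) · binom(2j, j−k). -/

import Mathlib

open Polynomial Finset Function fwdDiff

lemma sum_range_two_mul' {R : Type*} [AddCommMonoid R] (f : ℕ → R) (n : ℕ) :
    ∑ i ∈ Finset.range (2*n), f i = ∑ j ∈ Finset.range n, (f (2*j) + f (2*j+1)) := by
  induction n with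
  | zero => simp
  | succ n ih =>
    rw [Finset.sum_range_succ, ← ih, show 2*(n+1) = (2*n+1)+1 by ring,
      Finset.sum_range_succ, Finset.sum_range_succ, add_assoc]

lemma odd_pow_sub {R : Type*} [CommRing R] (u v : R) (n : ℕ) :
    (u+v)^(2*n+1) - (u-v)^(2*n+1)
      = ∑ j ∈ Finset.range (n+1), 2 * ((2*n+1).choose (2*j) : R) * u^(2*j) * v^(2*n+1-2*j) := by
  rw [sub_eq_add_neg u v, add_pow, add_pow, ← Finset.sum_sub_distrib,
    show 2*n+1+1 = 2*(n+1) by ring, sum_range_two_mul']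
  apply Finset.sum_congr rfl
  intro j hj
  have hj' : j ≤ n := by simpa [Nat.lt_succ] using Finset.mem_range.mp hj
  have e1 : 2*n+1-2*j = 2*(n-j)+1 := by omega
  have e2 : 2*n+1-(2*j+1) = 2*(n-j) := by omega
  rw [e1, e2]
  have h1 : (-v)^(2*(n-j)+1) = -v^(2*(n-j)+1) := Odd.neg_pow ⟨n-j, by ring⟩ v
  have h2 : (-v)^(2*(n-j)) = v^(2*(n-j)) := Even.neg_pow ⟨n-j, by ring⟩ v
  rw [h1, h2]
  ring

lemma coeff_one_add_X_sq_pow (M r : ℕ) :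
    ((1 + X^2 : ℤ[X])^M).coeff (2*r) = M.choose r := by
  rw [add_comm, add_pow, finset_sum_coeff]
  have h : ∀ l ∈ Finset.range (M+1),
      (((X^2:ℤ[X]))^l * 1^(M-l) * ((M.choose l : ℕ) : ℤ[X])).coeff (2*r)
        = if r = l then ((M.choose l : ℕ) : ℤ) else 0 := by
    intro l _
    rw [one_pow, mul_one, ← pow_mul]
    rw [show ((M.choose l : ℕ) : ℤ[X]) = C ((M.choose l : ℕ) : ℤ) by simp]
    rw [mul_comm, coeff_C_mul, coeff_X_pow]
    simp [Nat.mul_left_cancel_iff, eq_comm]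
  rw [Finset.sum_congr rfl h, Finset.sum_ite_eq]
  by_cases hr : r ∈ Finset.range (M+1)
  · simp [hr]
  · simp [hr, Nat.choose_eq_zero_of_lt (by simpa [Nat.lt_succ] using hr)]

lemma coeff_one_sub_X_pow (N d : ℕ) (hd : d ≤ N) :
    ((1 - X : ℤ[X])^N).coeff d = (-1)^d * N.choose d := by
  rw [sub_eq_add_neg, add_pow, finset_sum_coeff]
  have key : ∀ i, ((1:ℤ[X])^i * (-X)^(N-i) * ((N.choose i : ℕ) : ℤ[X])).coeff d
      = (if d = N - i then (-1)^(N-i) * (N.choose i:ℤ) else 0) := by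
    intro i
    rw [one_pow, one_mul, neg_pow]
    rw [show ((N.choose i : ℕ) : ℤ[X]) = C ((N.choose i : ℕ) : ℤ) by simp,
        show ((-1 : ℤ[X])^(N-i)) = C ((-1:ℤ)^(N-i)) by simp]
    rw [coeff_mul_C, coeff_C_mul, coeff_X_pow]
    simp [ite_mul, mul_ite]
  rw [Finset.sum_congr rfl (fun i _ => key i)]
  rw [Finset.sum_eq_single (N-d)]
  · rw [if_pos (by omega)]
    rw [show N - (N - d) = d by omega, Nat.choose_symm hd]
  · intro b hb hbne
    rw [if_neg (by rw [Finset.mem_range] at hb; omega)]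
  · intro h
    exact absurd (Finset.mem_range.mpr (by omega)) h

lemma star_nat (n a : ℕ) (ha : a ≤ 2*n) :
    ((4*n+2).choose (2*a+1) : ℤ)
      = ∑ j ∈ Finset.range (n+1), 2^(2*n+1-2*j) * ((2*n+1).choose (2*j)) *
          (if n ≤ a + j then ((2*j).choose (a+j-n) : ℤ) else 0) := by
  have key : ((1+X:ℤ[X])^(4*n+2) - (1-X)^(4*n+2))
      = ∑ j ∈ Finset.range (n+1), 2 * (((2*n+1).choose (2*j) : ℕ) : ℤ[X]) *
          ((1+X^2)^(2*j)) * ((2*X)^(2*n+1-2*j)) := by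
    have e : ((1:ℤ[X])+X)^2 = (1+X^2)+2*X := by ring
    have e' : ((1:ℤ[X])-X)^2 = (1+X^2)-2*X := by ring
    rw [show 4*n+2 = 2*(2*n+1) by ring, pow_mul, pow_mul, e, e',
      odd_pow_sub]
  have hc := congrArg (fun p => Polynomial.coeff p (2*a+1)) key
  rw [coeff_sub, coeff_one_add_X_pow, coeff_one_sub_X_pow _ _ (by omega), pow_succ,
    pow_mul] at hc
  simp only [neg_one_sq, one_pow, one_mul, neg_one_mul, sub_neg_eq_add] at hc
  -- hc : ↑C + ↑C = RHS.coeff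
  rw [finset_sum_coeff] at hc
  have hterm : ∀ j ∈ Finset.range (n+1),
      (2 * (((2*n+1).choose (2*j) : ℕ) : ℤ[X]) * ((1+X^2)^(2*j)) *
        ((2*X)^(2*n+1-2*j))).coeff (2*a+1)
      = 2 * (2^(2*n+1-2*j) * ((2*n+1).choose (2*j)) *
          (if n ≤ a + j then ((2*j).choose (a+j-n) : ℤ) else 0)) := by
    intro j hj
    have hj' : j ≤ n := by simpa [Nat.lt_succ] using Finset.mem_range.mp hj
    rw [mul_pow, show (2:ℤ[X])^(2*n+1-2*j) = C ((2:ℤ)^(2*n+1-2*j)) by simp,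
      show ((((2*n+1).choose (2*j) : ℕ)) : ℤ[X]) = C (((2*n+1).choose (2*j) : ℕ) : ℤ) by simp,
      show (2 : ℤ[X]) = C (2:ℤ) by simp]
    rw [show C (2:ℤ) * C (((2*n+1).choose (2*j) : ℕ) : ℤ) * (1+X^2)^(2*j) *
        (C ((2:ℤ)^(2*n+1-2*j)) * X^(2*n+1-2*j))
      = C ((2:ℤ) * ((2*n+1).choose (2*j)) * 2^(2*n+1-2*j)) * ((1+X^2)^(2*j) * X^(2*n+1-2*j))
        by rw [C_mul, C_mul]; ring]
    rw [coeff_C_mul, coeff_mul_X_pow']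
    by_cases hcase : n ≤ a + j
    · rw [if_pos (by omega), if_pos hcase]
      rw [show 2*a+1 - (2*n+1-2*j) = 2*(a+j-n) by omega, coeff_one_add_X_sq_pow]
      ring
    · rw [if_neg (by omega), if_neg hcase]
      ring
  rw [Finset.sum_congr rfl hterm, ← Finset.mul_sum] at hc
  have h2 : (2:ℤ) ≠ 0 := by norm_num
  have := hc
  rw [show ((4*n+2).choose (2*a+1) : ℤ) + ((4*n+2).choose (2*a+1) : ℤ)
    = 2 * ((4*n+2).choose (2*a+1) : ℤ) by ring] at this
  exact mul_left_cancel₀ h2 this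

lemma fwdDiff_pow_expand (d : ℕ) :
    Δ_[(1:ℚ)] (fun y : ℚ => y^d) = ∑ e ∈ Finset.range d, (d.choose e : ℚ) • (fun y : ℚ => y^e) := by
  funext y
  simp only [fwdDiff, Finset.sum_apply, Pi.smul_apply, smul_eq_mul]
  rw [add_pow]
  rw [Finset.sum_range_succ]
  simp [mul_comm]

lemma fwdDiff_pow_eq_zero (d N : ℕ) (h : d < N) :
    (Δ_[(1:ℚ)])^[N] (fun y : ℚ => y^d) = 0 := by
  induction d using Nat.strong_induction_on generalizing N with
  | _ d ih =>
    obtain ⟨N', rfl⟩ : ∃ N', N = N' + 1 := ⟨N - 1, by omega⟩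
    rw [Function.iterate_succ_apply, fwdDiff_pow_expand, fwdDiff_iter_finset_sum]
    apply Finset.sum_eq_zero
    intro e he
    rw [Finset.mem_range] at he
    rw [fwdDiff_iter_const_smul, ih e he N' (by omega), smul_zero]

lemma alt_sum_vanish (j m : ℕ) (hm : m < j) :
    ∑ i ∈ Finset.range (2*j+1), (-1:ℚ)^i * ((2*j).choose i : ℚ) * ((i:ℚ) - j)^(2*m) = 0 := by
  have h := fwdDiff_iter_eq_sum_shift (1:ℚ) (fun y : ℚ => y^(2*m)) (2*j) (-(j:ℚ))
  rw [fwdDiff_pow_eq_zero (2*m) (2*j) (by omega)] at h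
  simp only [Pi.zero_apply] at h
  have h2 : ∀ i ∈ Finset.range (2*j+1),
      (((-1:ℤ) ^ (2*j - i) * ((2*j).choose i : ℤ)) • (-(j:ℚ) + i • (1:ℚ))^(2*m))
        = (-1:ℚ)^i * ((2*j).choose i : ℚ) * ((i:ℚ) - j)^(2*m) := by
    intro i hi
    rw [Finset.mem_range] at hi
    have hpar : (-1:ℤ) ^ (2*j - i) = (-1:ℤ)^i := by
      rcases Nat.even_or_odd i with hi' | hi'
      · obtain ⟨r, rfl⟩ := hi'
        rw [Even.neg_one_pow ⟨r, rfl⟩, Even.neg_one_pow ⟨j - r, by omega⟩]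
      · obtain ⟨r, rfl⟩ := hi'
        rw [Odd.neg_one_pow ⟨r, rfl⟩, Odd.neg_one_pow ⟨j - r - 1, by omega⟩]
    rw [hpar, zsmul_eq_mul]
    push_cast
    ring_nf
  rw [Finset.sum_congr rfl h2] at h
  exact h.symm

lemma Tone (n a b : ℕ) (hab : a + b = 2*n) :
    (4*n+2) * (4*n+1).choose (2*a+1) = (2*b+1) * (4*n+2).choose (2*a+1) := by
  have h1 : (4*n+1).choose (2*a+1) = (4*n+1).choose (2*b) := by
    rw [← Nat.choose_symm (by omega : 2*a+1 ≤ 4*n+1)]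
    congr 1; omega
  have h2 : (4*n+2) * (4*n+1).choose (2*b) = (4*n+2).choose (2*b+1) * (2*b+1) := by
    have := Nat.add_one_mul_choose_eq (4*n+1) (2*b)
    simpa [Nat.succ_eq_add_one, show 4*n+1+1 = 4*n+2 by ring] using this
  have h3 : (4*n+2).choose (2*b+1) = (4*n+2).choose (2*a+1) := by
    rw [← Nat.choose_symm (by omega : 2*b+1 ≤ 4*n+2)]
    congr 1; omega
  rw [h1, h2, h3, mul_comm]

lemma Ttwo (n j : ℕ) (hj : j ≤ n) :
    (2*n+1) * (2*n).choose (2*j) = (2*(n-j)+1) * (2*n+1).choose (2*j) := by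
  have h1 : (2*n).choose (2*j) = (2*n).choose (2*(n-j)) := by
    rw [← Nat.choose_symm (by omega : 2*j ≤ 2*n)]
    congr 1; omega
  have h2 : (2*n+1) * (2*n).choose (2*(n-j)) = (2*n+1).choose (2*(n-j)+1) * (2*(n-j)+1) := by
    have := Nat.add_one_mul_choose_eq (2*n) (2*(n-j))
    simpa [Nat.succ_eq_add_one] using this
  have h3 : (2*n+1).choose (2*(n-j)+1) = (2*n+1).choose (2*j) := by
    rw [← Nat.choose_symm (by omega : 2*(n-j)+1 ≤ 2*n+1)]
    congr 1; omega
  rw [h1, h2, h3, mul_comm]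

lemma star_q (n : ℕ) (k : ℤ) (h1 : -(n:ℤ) ≤ k) (h2 : k ≤ (n:ℤ)) :
    (((4*n+2).choose (2*(n:ℤ)+2*k+1).toNat : ℕ) : ℚ)
      = ∑ j ∈ Finset.range (n+1), 2^(2*n+1-2*j) * ((2*n+1).choose (2*j) : ℚ) *
          (if -(j:ℤ) ≤ k then (((2*j).choose ((j:ℤ)+k).toNat : ℕ) : ℚ) else 0) := by
  obtain ⟨a, ha⟩ : ∃ a : ℕ, (a:ℤ) = (n:ℤ) + k := ⟨((n:ℤ)+k).toNat, by omega⟩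
  have ha2 : a ≤ 2*n := by omega
  have h := star_nat n a ha2
  have hq := congrArg (fun z : ℤ => (z : ℚ)) h
  push_cast [apply_ite (fun z : ℤ => (z:ℚ))] at hq
  rw [show (2*(n:ℤ)+2*k+1).toNat = 2*a+1 by omega, hq]
  apply Finset.sum_congr rfl
  intro j hj
  congr 1
  by_cases hc : -(j:ℤ) ≤ k
  · rw [if_pos (by omega), if_pos hc,
      show a+j-n = ((j:ℤ)+k).toNat by omega]
  · rw [if_neg (by omega), if_neg hc]

def wq (m : ℕ) (k : ℤ) : ℚ := (((k.negOnePow : ℤ) * k ^ (2*m) : ℤ) : ℚ)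

noncomputable def Aq (m j : ℕ) : ℚ :=
  ∑ k ∈ Finset.Icc (-(j:ℤ)) (j:ℤ), wq m k * (((2*j).choose ((j:ℤ)-k).toNat : ℕ) : ℚ)

def cq (n j : ℕ) : ℚ := 2^(2*n+1-2*j) * ((2*n+1).choose (2*j) : ℚ) / (4*(n:ℚ)+2)

lemma Aq_zero (m : ℕ) (hm : 0 < m) : Aq m 0 = 0 := by
  simp [Aq, wq, zero_pow (by omega : 2*m ≠ 0)]

lemma Aq_vanish (m j : ℕ) (hj : m < j) : Aq m j = 0 := by
  have himg : Finset.Icc (-(j:ℤ)) (j:ℤ)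
      = Finset.image (fun i : ℕ => (i:ℤ) - j) (Finset.range (2*j+1)) := by
    ext x
    simp only [Finset.mem_Icc, Finset.mem_image, Finset.mem_range]
    constructor
    · intro hx; exact ⟨(x+j).toNat, by omega, by omega⟩
    · rintro ⟨i, hi, rfl⟩; omega
  rw [Aq, himg, Finset.sum_image (by intro x _ y _ h; simp only at h; omega)]
  have hterm : ∀ i ∈ Finset.range (2*j+1),
      wq m ((i:ℤ) - j) * (((2*j).choose ((j:ℤ)-((i:ℤ)-j)).toNat : ℕ) : ℚ)
        = (-1:ℚ)^j * ((-1:ℚ)^i * ((2*j).choose i : ℚ) * ((i:ℚ) - j)^(2*m)) := by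
    intro i hi
    rw [Finset.mem_range] at hi
    rw [show ((j:ℤ)-((i:ℤ)-j)).toNat = 2*j - i by omega,
      Nat.choose_symm (by omega : i ≤ 2*j)]
    rw [wq, Int.negOnePow_sub]
    push_cast [Int.coe_negOnePow_natCast]
    ring
  rw [Finset.sum_congr rfl hterm, ← Finset.mul_sum, alt_sum_vanish j m hj, mul_zero]

lemma inner_sum_eq (m n j : ℕ) (hj : j ≤ n) :
    ∑ k ∈ Finset.Icc (-(n:ℤ)) (n:ℤ),
      wq m k * (if -(j:ℤ) ≤ k then (((2*j).choose ((j:ℤ)+k).toNat : ℕ) : ℚ) else 0)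
    = Aq m j := by
  have hsub : Finset.Icc (-(j:ℤ)) (j:ℤ) ⊆ Finset.Icc (-(n:ℤ)) (n:ℤ) :=
    Finset.Icc_subset_Icc (by simp only [neg_le_neg_iff]; exact_mod_cast hj) (by exact_mod_cast hj)
  rw [← Finset.sum_subset hsub]
  · apply Finset.sum_congr rfl
    intro k hk
    rw [Finset.mem_Icc] at hk
    rw [if_pos hk.1, show ((j:ℤ)+k).toNat = 2*j - ((j:ℤ)-k).toNat by omega,
      Nat.choose_symm (by omega : ((j:ℤ)-k).toNat ≤ 2*j)]
  · intro k hk hk'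
    rw [Finset.mem_Icc] at hk
    rw [Finset.mem_Icc] at hk'
    by_cases hc : -(j:ℤ) ≤ k
    · rw [if_pos hc, Nat.choose_eq_zero_of_lt (by omega : 2*j < ((j:ℤ)+k).toNat)]
      simp
    · rw [if_neg hc, mul_zero]

lemma LHS_eq (m n : ℕ) :
    ∑ k ∈ Finset.Icc (-(n : ℤ)) (n : ℤ),
      (((k.negOnePow : ℤ) * k ^ (2 * m) : ℤ) : ℚ) / (2 * (n : ℚ) - 2 * (k : ℚ) + 1) *
        (Nat.choose (4 * n + 1) (2 * (n : ℤ) + 2 * k + 1).toNat : ℚ)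
    = ∑ j ∈ Finset.range (n+1), cq n j * Aq m j := by
  have step1 : ∀ k ∈ Finset.Icc (-(n:ℤ)) (n:ℤ),
      (((k.negOnePow : ℤ) * k ^ (2 * m) : ℤ) : ℚ) / (2 * (n : ℚ) - 2 * (k : ℚ) + 1) *
        (Nat.choose (4 * n + 1) (2 * (n : ℤ) + 2 * k + 1).toNat : ℚ)
      = ∑ j ∈ Finset.range (n+1),
          cq n j * (wq m k * (if -(j:ℤ) ≤ k then (((2*j).choose ((j:ℤ)+k).toNat : ℕ) : ℚ) else 0)) := by
    intro k hk
    rw [Finset.mem_Icc] at hk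
    obtain ⟨a, ha⟩ : ∃ a : ℕ, (a:ℤ) = (n:ℤ) + k := ⟨((n:ℤ)+k).toNat, by omega⟩
    obtain ⟨b, hb⟩ : ∃ b : ℕ, (b:ℤ) = (n:ℤ) - k := ⟨((n:ℤ)-k).toNat, by omega⟩
    have hab : a + b = 2*n := by omega
    have hd : 2*(n:ℚ) - 2*(k:ℚ) + 1 = ((2*b+1 : ℕ):ℚ) := by
      have : (b:ℚ) = (n:ℚ) - (k:ℚ) := by exact_mod_cast congrArg (fun z : ℤ => (z:ℚ)) hb
      push_cast
      linarith
    have hXY : ((Nat.choose (4*n+1) (2*a+1) : ℕ):ℚ) / ((2*b+1:ℕ):ℚ)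
        = ((Nat.choose (4*n+2) (2*a+1) : ℕ):ℚ) / ((4*n+2:ℕ):ℚ) := by
      rw [div_eq_div_iff (by positivity) (by positivity)]
      have h := Tone n a b hab
      have h' : (4*n+1).choose (2*a+1) * (4*n+2) = (4*n+2).choose (2*a+1) * (2*b+1) := by
        rw [mul_comm, h, mul_comm]
      exact_mod_cast h'
    have e1 : (2*(n:ℤ)+2*k+1).toNat = 2*a+1 := by omega
    rw [e1, hd]
    rw [div_mul_eq_mul_div, mul_div_assoc, hXY, ← mul_div_assoc, ← div_mul_eq_mul_div]
    -- now:  w / (4n+2) * C(4n+2, 2a+1) ; rewrite via star_q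
    rw [show ((Nat.choose (4*n+2) (2*a+1) : ℕ):ℚ)
        = (((4*n+2).choose (2*(n:ℤ)+2*k+1).toNat : ℕ) : ℚ) by rw [e1]]
    rw [star_q n k hk.1 hk.2, Finset.mul_sum]
    apply Finset.sum_congr rfl
    intro j hj
    rw [cq, wq]
    push_cast
    ring
  rw [Finset.sum_congr rfl step1, Finset.sum_comm]
  apply Finset.sum_congr rfl
  intro j hj
  rw [← Finset.mul_sum, inner_sum_eq m n j (by simpa [Nat.lt_succ] using Finset.mem_range.mp hj)]

lemma RHS_eq (m n : ℕ) :
    ∑ j ∈ Finset.Icc 1 m, ∑ k ∈ Finset.Icc (-(j : ℤ)) (j : ℤ),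
        (4 : ℚ) ^ ((n : ℤ) - (j : ℤ)) *
          (((k.negOnePow : ℤ) * k ^ (2 * m) : ℤ) : ℚ) / (2 * (n : ℚ) - 2 * (j : ℚ) + 1) *
          (Nat.choose (2 * n) (2 * j) : ℚ) *
          (Nat.choose (2 * j) ((j : ℤ) - k).toNat : ℚ)
    = ∑ j ∈ Finset.Icc 1 m, cq n j * Aq m j := by
  apply Finset.sum_congr rfl
  intro j hj
  have hpull : ∑ k ∈ Finset.Icc (-(j : ℤ)) (j : ℤ),
        (4 : ℚ) ^ ((n : ℤ) - (j : ℤ)) *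
          (((k.negOnePow : ℤ) * k ^ (2 * m) : ℤ) : ℚ) / (2 * (n : ℚ) - 2 * (j : ℚ) + 1) *
          (Nat.choose (2 * n) (2 * j) : ℚ) *
          (Nat.choose (2 * j) ((j : ℤ) - k).toNat : ℚ)
      = ((4 : ℚ) ^ ((n : ℤ) - (j : ℤ)) * (Nat.choose (2*n) (2*j) : ℚ)
          / (2 * (n : ℚ) - 2 * (j : ℚ) + 1)) * Aq m j := by
    rw [Aq, Finset.mul_sum]
    apply Finset.sum_congr rfl
    intro k _
    rw [wq]
    ring
  rw [hpull]
  by_cases hjn : j ≤ n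
  · congr 1
    have e4 : (4:ℚ)^((n:ℤ)-(j:ℤ)) = 2^(2*(n-j)) := by
      rw [show (n:ℤ)-(j:ℤ) = ((n-j:ℕ):ℤ) by omega, zpow_natCast,
        show (4:ℚ) = 2^2 by norm_num, ← pow_mul]
    have hdj : 2*(n:ℚ) - 2*(j:ℚ) + 1 = ((2*(n-j)+1 : ℕ):ℚ) := by
      push_cast [hjn]
      ring
    have hdiv : ((Nat.choose (2*n) (2*j) : ℕ) : ℚ) / ((2*(n-j)+1:ℕ):ℚ)
        = ((Nat.choose (2*n+1) (2*j) : ℕ) : ℚ) / ((2*n+1:ℕ):ℚ) := by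
      rw [div_eq_div_iff (by positivity) (by positivity)]
      have h := Ttwo n j hjn
      have h' : (2*n).choose (2*j) * (2*n+1) = (2*n+1).choose (2*j) * (2*(n-j)+1) := by
        rw [mul_comm, h, mul_comm]
      exact_mod_cast h'
    rw [e4, hdj, cq, show 2*n+1-2*j = 2*(n-j)+1 by omega]
    rw [mul_div_assoc, hdiv, pow_succ]
    have h1 : ((2*n+1:ℕ):ℚ) ≠ 0 := by positivity
    have h2 : (4*(n:ℚ)+2) ≠ 0 := by positivity
    field_simp
    push_cast
    ring
  · have hz1 : (Nat.choose (2*n) (2*j) : ℚ) = 0 := by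
      rw [Nat.choose_eq_zero_of_lt (by omega)]; simp
    have hz2 : ((2*n+1).choose (2*j) : ℚ) = 0 := by
      rw [Nat.choose_eq_zero_of_lt (by omega)]; simp
    rw [cq, hz1, hz2]
    simp

/-- For all positive integers `m`, `n`:
`∑_{k=−n}^{n} (−1)^k k^(2m)/(2n−2k+1) ⬝ C(4n+1, 2n+2k+1)
  = ∑_{j=1}^{m} ∑_{k=−j}^{j} 4^(n−j)(−1)^k k^(2m)/(2n−2j+1) ⬝ C(2n, 2j) C(2j, j−k)`. -/
theorem combinatorial_identity_even (m n : ℕ) (hm : 0 < m) (hn : 0 < n) :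
    ∑ k ∈ Finset.Icc (-(n : ℤ)) (n : ℤ),
      (((k.negOnePow : ℤ) * k ^ (2 * m) : ℤ) : ℚ) / (2 * (n : ℚ) - 2 * (k : ℚ) + 1) *
        (Nat.choose (4 * n + 1) (2 * (n : ℤ) + 2 * k + 1).toNat : ℚ)
    = ∑ j ∈ Finset.Icc 1 m, ∑ k ∈ Finset.Icc (-(j : ℤ)) (j : ℤ),
        (4 : ℚ) ^ ((n : ℤ) - (j : ℤ)) *
          (((k.negOnePow : ℤ) * k ^ (2 * m) : ℤ) : ℚ) / (2 * (n : ℚ) - 2 * (j : ℚ) + 1) *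
          (Nat.choose (2 * n) (2 * j) : ℚ) *
          (Nat.choose (2 * j) ((j : ℤ) - k).toNat : ℚ) := by
  rw [LHS_eq m n, RHS_eq m n]
  have h1 : ∑ j ∈ Finset.range (n+1), cq n j * Aq m j
      = ∑ j ∈ Finset.range (n+m+2), cq n j * Aq m j := by
    apply Finset.sum_subset (by intro x hx; simp only [Finset.mem_range] at *; omega)
    intro j hj hj'
    simp only [Finset.mem_range, not_lt] at hj'
    rw [cq, Nat.choose_eq_zero_of_lt (by omega : 2*n+1 < 2*j)]
    simp
  have h2 : ∑ j ∈ Finset.Icc 1 m, cq n j * Aq m j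
      = ∑ j ∈ Finset.range (n+m+2), cq n j * Aq m j := by
    apply Finset.sum_subset (by intro x hx; simp only [Finset.mem_Icc, Finset.mem_range] at *; omega)
    intro j hj hj'
    simp only [Finset.mem_Icc, not_and, not_le] at hj'
    rcases Nat.eq_zero_or_pos j with rfl | hjpos
    · rw [Aq_zero m hm, mul_zero]
    · rw [Aq_vanish m j (by omega), mul_zero]
  rw [h1, h2]
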